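/- Let z = (I + L)^{−1} s be the equilibrium opinion vector of the FJ model on a signed graph with internal opinion vector s ∈ [−1,1]^n, and define the internal conflict I(G,s) = Σ_i (z_i − s_i)², the disagreement D(G,s) = zᵀ L z, the disagreement with friends F(G,s) = zᵀ L⁺ z, the agreement with opponents E(G,s) = zᵀ L⁻ z, and the polarization P(G,s) = (1/n) Σ_i z_i². Then the conservation laws I(G,s) + 2·D(G,s) + n·P(G,s) = Σ_{i=1}^{n} s_i² and F(G,s) + E(G,s) = D(G,s) hold. -/

import Mathlib

open Matrix

theorem stmt_7 (n : ℕ) (hn : 1 ≤ n) (A : Matrix (Fin n) (Fin n) ℝ)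
    (hAsymm : A.IsSymm) (hAdiag : ∀ i, A i i = 0)
    (hAval : ∀ i j, A i j = -1 ∨ A i j = 0 ∨ A i j = 1)
    (Apos Aneg D Dp Dm L Lp Lm : Matrix (Fin n) (Fin n) ℝ)
    (hApos : ∀ i j, Apos i j = max (A i j) 0)
    (hAneg : ∀ i j, Aneg i j = min (A i j) 0)
    (hD : D = Matrix.diagonal fun i => ∑ j, |A i j|)
    (hDp : Dp = Matrix.diagonal fun i => ∑ j, Apos i j)
    (hDm : Dm = Matrix.diagonal fun i => ∑ j, |Aneg i j|)
    (hL : L = D - A) (hLp : Lp = Dp - Apos) (hLm : Lm = Dm - Aneg)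
    (s : Fin n → ℝ) (hs : ∀ i, s i ∈ Set.Icc (-1 : ℝ) 1)
    (z : Fin n → ℝ) (hz : z = (1 + L)⁻¹ *ᵥ s) :
    (∑ i, (z i - s i) ^ 2) + 2 * (z ⬝ᵥ L *ᵥ z) +
        (n : ℝ) * ((1 / (n : ℝ)) * ∑ i, z i ^ 2) = ∑ i, s i ^ 2 ∧
    z ⬝ᵥ Lp *ᵥ z + z ⬝ᵥ Lm *ᵥ z = z ⬝ᵥ L *ᵥ z := by
  -- quadratic form of L as a double sum
  have hQ : ∀ x : Fin n → ℝ, x ⬝ᵥ L *ᵥ x =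
      ∑ i, ∑ j, (|A i j| * x i ^ 2 - A i j * (x i * x j)) := by
    intro x
    rw [hL, hD]
    simp only [dotProduct, mulVec, Matrix.sub_apply, Matrix.diagonal_apply]
    refine Finset.sum_congr rfl fun i _ => ?_
    have e1 : ∑ j, ((if i = j then (∑ k, |A i k|) else 0) - A i j) * x j
        = (∑ j, |A i j|) * x i - ∑ j, A i j * x j := by
      simp only [sub_mul, Finset.sum_sub_distrib, ite_mul, zero_mul]
      rw [Finset.sum_ite_eq Finset.univ i (fun j => (∑ k, |A i k|) * x j)]
      simp
    rw [e1, mul_sub, Finset.sum_sub_distrib]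
    congr 1
    · rw [← Finset.sum_mul]; ring
    · rw [Finset.mul_sum]; exact Finset.sum_congr rfl fun j _ => by ring
  -- nonnegativity of the quadratic form
  have hQnn : ∀ x : Fin n → ℝ, 0 ≤ x ⬝ᵥ L *ᵥ x := by
    intro x
    have h2 : 2 * (x ⬝ᵥ L *ᵥ x) =
        ∑ i, ∑ j, ((|A i j| * x i ^ 2 - A i j * (x i * x j)) +
          (|A i j| * x j ^ 2 - A i j * (x i * x j))) := by
      rw [hQ, two_mul]
      nth_rewrite 2 [Finset.sum_comm]
      rw [← Finset.sum_add_distrib]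
      refine Finset.sum_congr rfl fun i _ => ?_
      rw [← Finset.sum_add_distrib]
      refine Finset.sum_congr rfl fun j _ => ?_
      rw [hAsymm.apply i j]
      ring
    have hnn : 0 ≤ ∑ i, ∑ j, ((|A i j| * x i ^ 2 - A i j * (x i * x j)) +
        (|A i j| * x j ^ 2 - A i j * (x i * x j))) := by
      refine Finset.sum_nonneg fun i _ => Finset.sum_nonneg fun j _ => ?_
      rcases hAval i j with h | h | h <;> rw [h] <;>
        simp only [abs_neg, abs_one, abs_zero, one_mul, zero_mul, neg_mul] <;>
        nlinarith [sq_nonneg (x i - x j), sq_nonneg (x i + x j)]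
    linarith
  -- 1 + L is positive definite
  have hLherm : L.IsHermitian := by
    rw [hL, hD]
    ext i j
    simp only [Matrix.conjTranspose_apply, Matrix.sub_apply, Matrix.diagonal_apply,
      star_sub, star_trivial]
    by_cases h : i = j
    · subst h; rfl
    · rw [if_neg h, if_neg (fun hh : j = i => h hh.symm), hAsymm.apply i j]
  have hPD : (1 + L).PosDef := by
    refine Matrix.PosDef.of_dotProduct_mulVec_pos ?_ ?_
    · exact Matrix.isHermitian_one.add hLherm
    · intro x hx
      have hstar : star x = x := by simp
      rw [hstar, Matrix.add_mulVec, dotProduct_add, Matrix.one_mulVec]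
      have h1 : 0 < x ⬝ᵥ x := by
        rcases Function.ne_iff.mp hx with ⟨i, hi⟩
        simp only [Pi.zero_apply] at hi
        have : 0 < ∑ j, x j * x j :=
          Finset.sum_pos' (fun j _ => mul_self_nonneg _)
            ⟨i, Finset.mem_univ i, mul_self_pos.mpr hi⟩
        exact this
      have h2 := hQnn x
      linarith
  -- invertibility gives (1 + L) *ᵥ z = s
  have hinv : (1 + L) *ᵥ z = s := by
    rw [hz, Matrix.mulVec_mulVec,
      Matrix.mul_nonsing_inv _ ((Matrix.isUnit_iff_isUnit_det _).mp hPD.isUnit),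
      Matrix.one_mulVec]
  have hsz : ∀ i, s i = z i + (L *ᵥ z) i := by
    intro i
    rw [← hinv, Matrix.add_mulVec, Matrix.one_mulVec]
    rfl
  constructor
  · have hn0 : (n : ℝ) ≠ 0 := by positivity
    have hmul : (n : ℝ) * ((1 / (n : ℝ)) * ∑ i, z i ^ 2) = ∑ i, z i ^ 2 := by
      field_simp
    rw [hmul]
    have hdot : z ⬝ᵥ L *ᵥ z = ∑ i, z i * (L *ᵥ z) i := rfl
    rw [hdot, Finset.mul_sum, ← Finset.sum_add_distrib, ← Finset.sum_add_distrib]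
    refine Finset.sum_congr rfl fun i _ => ?_
    rw [hsz i]
    ring
  · have hLsum : Lp + Lm = L := by
      rw [hLp, hLm, hL, hDp, hDm, hD]
      ext i j
      simp only [Matrix.add_apply, Matrix.sub_apply, Matrix.diagonal_apply]
      have h2 : Apos i j + Aneg i j = A i j := by
        rw [hApos, hAneg, max_add_min, add_zero]
      by_cases h : i = j
      · subst h
        simp only [eq_self_iff_true, if_true]
        have h3 : ∑ k, Apos i k + ∑ k, |Aneg i k| = ∑ k, |A i k| := by
          rw [← Finset.sum_add_distrib]
          refine Finset.sum_congr rfl fun k _ => ?_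
          rw [hApos, hAneg]
          rcases hAval i k with h | h | h <;> rw [h] <;> norm_num
        linarith
      · simp only [if_neg h]
        linarith
    rw [← hLsum, Matrix.add_mulVec, dotProduct_add]
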